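/- Let D be a digraph, s a vertex, and suppose that in D − s there are at least 2k strong components each containing an out-neighbour of s, for some k ≥ max(k₁, k₂) with k₁, k₂ ≥ 1. Suppose furthermore that D − s contains an induced subdigraph with minimum in-degree at least 1 and at least k₂ vertices. Then there exist disjoint vertex sets V₁, V₂ with s ∈ V₁, |V₁| ≥ k₁, |V₂| ≥ k₂, such that D[V₁] contains an out-branching rooted at s and every vertex of D[V₂] has in-degree at least 1 in D[V₂]. -/

import Mathlib

/-- Step relation of `D[X]`. -/
def stepIn {V : Type*} (A : V → V → Prop) (X : Set V) (x y : V) : Prop :=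
  A x y ∧ x ∈ X ∧ y ∈ X

/-- Ancestors of `v` inside `X`. -/
def anc {V : Type*} (A : V → V → Prop) (X : Set V) (v : V) : Set V :=
  {u | u ∈ X ∧ Relation.ReflTransGen (stepIn A X) u v}

lemma anc_subset {V : Type*} (A : V → V → Prop) (X : Set V) (v : V) :
    anc A X v ⊆ X := fun _ h => h.1

lemma mem_anc_self {V : Type*} (A : V → V → Prop) {X : Set V} {v : V} (hv : v ∈ X) :
    v ∈ anc A X v := ⟨hv, Relation.ReflTransGen.refl⟩

lemma anc_trans {V : Type*} (A : V → V → Prop) {X : Set V} {u w v : V}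
    (hu : u ∈ anc A X w) (hw : w ∈ anc A X v) : u ∈ anc A X v :=
  ⟨hu.1, hu.2.trans hw.2⟩

/-- There is a reachability-minimal vertex: its ancestor set is strongly connected. -/
lemma exists_min_anc {V : Type*} [Fintype V] (A : V → V → Prop) (X : Set V) :
    ∀ n (v : V), v ∈ X → (anc A X v).ncard ≤ n →
      ∃ v' ∈ X, anc A X v' ⊆ anc A X v ∧ ∀ u ∈ anc A X v', v' ∈ anc A X u := by
  intro n
  induction n with
  | zero =>
    intro v hv hc
    exfalso
    have hmem : v ∈ anc A X v := mem_anc_self A hv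
    have := Set.ncard_pos (Set.toFinite (anc A X v)) |>.mpr ⟨v, hmem⟩
    omega
  | succ n ih =>
    intro v hv hc
    by_cases h : ∀ u ∈ anc A X v, v ∈ anc A X u
    · exact ⟨v, hv, subset_rfl, h⟩
    · push_neg at h
      obtain ⟨u, hu, hvu⟩ := h
      have hsub : anc A X u ⊆ anc A X v := fun x hx => anc_trans A hx hu
      have hss : anc A X u ⊂ anc A X v :=
        ⟨hsub, fun hsup => hvu (hsup (mem_anc_self A hv))⟩
      have hlt : (anc A X u).ncard < (anc A X v).ncard :=
        Set.ncard_lt_ncard hss (Set.toFinite _)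
      obtain ⟨v', hv', hs', hmin⟩ := ih u hu.1 (by omega)
      exact ⟨v', hv', hs'.trans hsub, hmin⟩

/-- Greedy construction of a set with minimum in-degree ≥ 1, of size ≥ n,
containing at most n vertices of the pairwise non-mutually-reachable set W. -/
lemma build {V : Type*} [Fintype V] (A : V → V → Prop) (U : Set V)
    (hUP : ∀ v ∈ U, ∃ u ∈ U, A u v) (W : Set V)
    (hW : ∀ w ∈ W, ∀ w' ∈ W, w ≠ w' →
      ¬ (Relation.ReflTransGen (stepIn A U) w w' ∧ Relation.ReflTransGen (stepIn A U) w' w)) :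
    ∀ n, n ≤ U.ncard → ∃ S ⊆ U, (∀ v ∈ S, ∃ u ∈ S, A u v) ∧ n ≤ S.ncard ∧ (S ∩ W).ncard ≤ n := by
  intro n
  induction n with
  | zero =>
    intro _
    exact ⟨∅, Set.empty_subset _, by simp, by simp, by simp⟩
  | succ n ih =>
    intro hn
    obtain ⟨S, hSU, hSP, hScard, hSW⟩ := ih (by omega)
    by_cases hbig : n + 1 ≤ S.ncard
    · exact ⟨S, hSU, hSP, hbig, by omega⟩
    · have hScard' : S.ncard = n := by omega
      have hne : (U \ S).Nonempty := by
        rw [Set.diff_nonempty]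
        intro hUS
        have := Set.ncard_le_ncard hUS (Set.toFinite _)
        omega
      obtain ⟨v, hv⟩ := hne
      set X := U \ S with hX
      obtain ⟨v', hv', -, hmin⟩ := exists_min_anc A X (anc A X v).ncard v hv le_rfl
      set C := anc A X v' with hC
      have hCX : C ⊆ X := anc_subset A X v'
      have hCU : C ⊆ U := hCX.trans Set.diff_subset
      have hdisj : Disjoint S C := by
        rw [Set.disjoint_right]
        intro x hx
        exact (hCX hx).2
      refine ⟨S ∪ C, Set.union_subset hSU hCU, ?_, ?_, ?_⟩
      · rintro x (hx | hx)
        · obtain ⟨u, hu, hA⟩ := hSP x hx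
          exact ⟨u, Or.inl hu, hA⟩
        · obtain ⟨u, huU, hA⟩ := hUP x (hCU hx)
          by_cases huS : u ∈ S
          · exact ⟨u, Or.inl huS, hA⟩
          · have huX : u ∈ X := ⟨huU, huS⟩
            have hmem : u ∈ anc A X x :=
              ⟨huX, Relation.ReflTransGen.single ⟨hA, huX, hCX hx⟩⟩
            exact ⟨u, Or.inr (anc_trans A hmem hx), hA⟩
      · have hCne : v' ∈ C := mem_anc_self A hv'
        have h1 : 1 ≤ C.ncard := Set.ncard_pos (Set.toFinite _) |>.mpr ⟨v', hCne⟩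
        rw [Set.ncard_union_eq hdisj (Set.toFinite _) (Set.toFinite _)]
        omega
      · have hC1 : (C ∩ W).ncard ≤ 1 := by
          rw [Set.ncard_le_one (Set.toFinite _)]
          rintro a ⟨haC, haW⟩ b ⟨hbC, hbW⟩
          by_contra hab
          refine hW a haW b hbW hab ⟨?_, ?_⟩
          · exact Relation.ReflTransGen.mono
              (fun x y (h : stepIn A X x y) => (⟨h.1, h.2.1.1, h.2.2.1⟩ : stepIn A U x y)) _ _ (haC.2.trans (hmin b hbC).2)
          · exact Relation.ReflTransGen.mono
              (fun x y (h : stepIn A X x y) => (⟨h.1, h.2.1.1, h.2.2.1⟩ : stepIn A U x y)) _ _ (hbC.2.trans (hmin a haC).2)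
        have hsplit : (S ∪ C) ∩ W = (S ∩ W) ∪ (C ∩ W) := Set.union_inter_distrib_right S C W
        rw [hsplit]
        calc ((S ∩ W) ∪ (C ∩ W)).ncard ≤ (S ∩ W).ncard + (C ∩ W).ncard :=
              Set.ncard_union_le _ _
          _ ≤ n + 1 := by omega

/-- The induced subdigraph `D[S]` has an out-branching rooted at `r`. -/
def HasOutBranchingFrom {V : Type*} (A : V → V → Prop) (S : Set V) (r : V) : Prop :=
  r ∈ S ∧ ∃ T : V → V → Prop,
    (∀ u v, T u v → A u v ∧ u ∈ S ∧ v ∈ S) ∧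
    (∀ u, ¬ T u r) ∧
    (∀ v ∈ S, v ≠ r → ∃! u, T u v) ∧
    (∀ v ∈ S, Relation.ReflTransGen (fun x y => T x y ∨ T y x) r v)

/-- If `D - s` has at least `2k` strong components each containing an out-neighbour
of `s` (witnessed by out-neighbours of `s` that are pairwise not mutually reachable
in `D - s`), where `k ≥ max(k₁,k₂)` and `k₁, k₂ ≥ 1`, and `D - s` contains an
induced subdigraph with minimum in-degree at least `1` and at least `k₂` vertices,
then there are disjoint sets `V₁, V₂` with `s ∈ V₁`, `|V₁| ≥ k₁`, `|V₂| ≥ k₂`,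
`D[V₁]` having an out-branching rooted at `s` and `δ⁻(D[V₂]) ≥ 1`. -/
theorem stmt_14 {V : Type*} [Fintype V] (A : V → V → Prop) (s : V)
    (k k₁ k₂ : ℕ) (hk₁ : 1 ≤ k₁) (hk₂ : 1 ≤ k₂) (hk₁k : k₁ ≤ k) (hk₂k : k₂ ≤ k)
    (hW : ∃ W : Finset V, 2 * k ≤ W.card ∧ (∀ w ∈ W, A s w ∧ w ≠ s) ∧
      ∀ w ∈ W, ∀ w' ∈ W, w ≠ w' →
        ¬ (Relation.ReflTransGen (fun x y => A x y ∧ x ≠ s ∧ y ≠ s) w w' ∧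
           Relation.ReflTransGen (fun x y => A x y ∧ x ≠ s ∧ y ≠ s) w' w))
    (hU : ∃ U : Set V, s ∉ U ∧ k₂ ≤ Nat.card U ∧ ∀ v ∈ U, ∃ u ∈ U, A u v) :
    ∃ V₁ V₂ : Set V, Disjoint V₁ V₂ ∧ s ∈ V₁ ∧
      k₁ ≤ Nat.card V₁ ∧ k₂ ≤ Nat.card V₂ ∧
      HasOutBranchingFrom A V₁ s ∧ ∀ v ∈ V₂, ∃ u ∈ V₂, A u v := by
  obtain ⟨W, hWcard, hWA, hWpair⟩ := hW
  obtain ⟨U, hsU, hUcard, hUP⟩ := hU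
  rw [Nat.card_coe_set_eq] at hUcard
  -- pairwise non-mutual reachability transfers to steps inside U
  have hWpair' : ∀ w ∈ (↑W : Set V), ∀ w' ∈ (↑W : Set V), w ≠ w' →
      ¬ (Relation.ReflTransGen (stepIn A U) w w' ∧ Relation.ReflTransGen (stepIn A U) w' w) := by
    intro w hw w' hw' hne ⟨h1, h2⟩
    have hmono : ∀ x y, stepIn A U x y → A x y ∧ x ≠ s ∧ y ≠ s := by
      rintro x y ⟨hA, hx, hy⟩
      exact ⟨hA, fun h => hsU (h ▸ hx), fun h => hsU (h ▸ hy)⟩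
    exact hWpair w hw w' hw' hne ⟨Relation.ReflTransGen.mono hmono _ _ h1, Relation.ReflTransGen.mono hmono _ _ h2⟩
  obtain ⟨V₂, hV₂U, hV₂P, hV₂card, hV₂W⟩ := build A U hUP (↑W) hWpair' k₂ hUcard
  -- choose k₁ - 1 vertices of W outside V₂
  have hWdiff : k₁ - 1 ≤ ((↑W : Set V) \ V₂).ncard := by
    have := Set.ncard_inter_add_ncard_diff_eq_ncard (↑W : Set V) V₂ (Set.toFinite _)
    have hWn : (↑W : Set V).ncard = W.card := Set.ncard_coe_finset W
    have hint : ((↑W : Set V) ∩ V₂).ncard ≤ k₂ := by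
      have : (↑W : Set V) ∩ V₂ = V₂ ∩ ↑W := Set.inter_comm _ _
      rw [this]; exact hV₂W
    omega
  obtain ⟨F, hFsub, hFcard⟩ := Set.exists_subset_card_eq hWdiff
  have hFW : F ⊆ (↑W : Set V) := hFsub.trans Set.diff_subset
  have hsF : s ∉ F := fun h => (hWA s (hFW h)).2 rfl
  have hsV₂ : s ∉ V₂ := fun h => hsU (hV₂U h)
  refine ⟨insert s F, V₂, ?_, Set.mem_insert s F, ?_, ?_, ?_, hV₂P⟩
  · rw [Set.disjoint_left]
    rintro x (rfl | hx)
    · exact hsV₂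
    · exact fun hxV₂ => (hFsub hx).2 hxV₂
  · rw [Nat.card_coe_set_eq, Set.ncard_insert_of_notMem hsF (Set.toFinite _), hFcard]
    omega
  · rw [Nat.card_coe_set_eq]
    omega
  · refine ⟨Set.mem_insert s F, fun u v => u = s ∧ v ∈ F, ?_, ?_, ?_, ?_⟩
    · rintro u v ⟨hu, hv⟩
      refine ⟨?_, ?_, Set.mem_insert_of_mem s hv⟩
      · rw [hu]; exact (hWA v (hFW hv)).1
      · rw [hu]; exact Set.mem_insert s F
    · rintro u ⟨-, hs⟩
      exact hsF hs
    · rintro v (rfl | hv) hne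
      · exact absurd rfl hne
      · exact ⟨s, ⟨rfl, hv⟩, fun y hy => hy.1⟩
    · rintro v (rfl | hv)
      · exact Relation.ReflTransGen.refl
      · exact Relation.ReflTransGen.single (Or.inl ⟨rfl, hv⟩)
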